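/- Let $g_1, g_2, g_3$ be pairwise commuting nontrivial elements of a group $G$. If $(1-g_1)(1-g_2)(1-g_3) = 0$ in the group algebra $\mathbb{C}G$, then $g_1, g_2, g_3$ each have order $2$ and $g_1 g_2 g_3 = 1$. -/

import Mathlib

/-- If `g₁, g₂, g₃` are pairwise commuting nontrivial elements of a group `G` and
`(1-g₁)(1-g₂)(1-g₃) = 0` in `ℂG`, then each `gᵢ` has order `2` and `g₁g₂g₃ = 1`. -/
theorem order_two_of_product_eq_zero {G : Type*} [Group G] (g₁ g₂ g₃ : G)
    (h1 : g₁ ≠ 1) (h2 : g₂ ≠ 1) (h3 : g₃ ≠ 1)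
    (hc12 : Commute g₁ g₂) (hc13 : Commute g₁ g₃) (hc23 : Commute g₂ g₃)
    (hzero : (1 - MonoidAlgebra.of ℂ G g₁) * (1 - MonoidAlgebra.of ℂ G g₂) *
      (1 - MonoidAlgebra.of ℂ G g₃) = 0) :
    orderOf g₁ = 2 ∧ orderOf g₂ = 2 ∧ orderOf g₃ = 2 ∧ g₁ * g₂ * g₃ = 1 := by
  classical
  have e1 : (1 - MonoidAlgebra.of ℂ G g₁) * (1 - MonoidAlgebra.of ℂ G g₂) *
      (1 - MonoidAlgebra.of ℂ G g₃)
      = 1 - MonoidAlgebra.of ℂ G g₁ - MonoidAlgebra.of ℂ G g₂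
        + MonoidAlgebra.of ℂ G g₁ * MonoidAlgebra.of ℂ G g₂
        - MonoidAlgebra.of ℂ G g₃
        + MonoidAlgebra.of ℂ G g₁ * MonoidAlgebra.of ℂ G g₃
        + MonoidAlgebra.of ℂ G g₂ * MonoidAlgebra.of ℂ G g₃
        - MonoidAlgebra.of ℂ G g₁ * MonoidAlgebra.of ℂ G g₂ * MonoidAlgebra.of ℂ G g₃ := by
    noncomm_ring
  rw [e1] at hzero
  simp only [MonoidAlgebra.of_apply, MonoidAlgebra.one_def,
    MonoidAlgebra.single_mul_single, one_mul] at hzero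
  have key' : MonoidAlgebra.single (1:G) (1:ℂ) + MonoidAlgebra.single (g₁*g₂) 1
      + MonoidAlgebra.single (g₁*g₃) 1 + MonoidAlgebra.single (g₂*g₃) 1
      = MonoidAlgebra.single g₁ 1 + MonoidAlgebra.single g₂ 1 + MonoidAlgebra.single g₃ 1
      + MonoidAlgebra.single (g₁*g₂*g₃) 1 := by
    rw [← sub_eq_zero, ← hzero]; abel
  have key : Finsupp.single (1:G) (1:ℂ) + Finsupp.single (g₁*g₂) 1
      + Finsupp.single (g₁*g₃) 1 + Finsupp.single (g₂*g₃) 1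
      = Finsupp.single g₁ 1 + Finsupp.single g₂ 1 + Finsupp.single g₃ 1
      + Finsupp.single (g₁*g₂*g₃) 1 := congrArg MonoidAlgebra.coeff key'
  -- coefficient at 1 : g₁g₂g₃ = 1
  have habc : g₁ * g₂ * g₃ = 1 := by
    have c := congrArg (fun f : G →₀ ℂ => f 1) key
    simp only [Finsupp.add_apply, Finsupp.single_apply, h1, h2, h3,
      if_pos rfl, if_false] at c
    split_ifs at c <;> first | assumption | norm_num at c
  -- coefficient at g₁ : g₂g₃ = g₁
  have h23 : g₂ * g₃ = g₁ := by
    have c := congrArg (fun f : G →₀ ℂ => f g₁) key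
    have n1 : (1 : G) ≠ g₁ := fun h => h1 h.symm
    have nabc : g₁ * g₂ * g₃ ≠ g₁ := by rw [habc]; exact n1
    simp only [Finsupp.add_apply, Finsupp.single_apply, n1, nabc,
      if_pos rfl, if_false, mul_eq_left, mul_eq_right, h2, h3] at c
    split_ifs at c <;> first | assumption | norm_num at c
  -- coefficient at g₂ : g₁g₃ = g₂
  have h13 : g₁ * g₃ = g₂ := by
    have c := congrArg (fun f : G →₀ ℂ => f g₂) key
    have n1 : (1 : G) ≠ g₂ := fun h => h2 h.symm
    have nabc : g₁ * g₂ * g₃ ≠ g₂ := by rw [habc]; exact n1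
    simp only [Finsupp.add_apply, Finsupp.single_apply, n1, nabc,
      if_pos rfl, if_false, mul_eq_left, mul_eq_right, h1, h3] at c
    split_ifs at c <;> first | assumption | norm_num at c
  -- coefficient at g₃ : g₁g₂ = g₃
  have h12 : g₁ * g₂ = g₃ := by
    have c := congrArg (fun f : G →₀ ℂ => f g₃) key
    have n1 : (1 : G) ≠ g₃ := fun h => h3 h.symm
    have nabc : g₁ * g₂ * g₃ ≠ g₃ := by rw [habc]; exact n1
    simp only [Finsupp.add_apply, Finsupp.single_apply, n1, nabc,
      if_pos rfl, if_false, mul_eq_left, mul_eq_right, h1, h2] at c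
    split_ifs at c <;> first | assumption | norm_num at c
  have s1 : g₁ ^ 2 = 1 := by
    rw [sq]
    calc g₁ * g₁ = g₁ * (g₂ * g₃) := by rw [h23]
    _ = 1 := by rw [← mul_assoc, habc]
  have s2 : g₂ ^ 2 = 1 := by
    rw [sq]
    calc g₂ * g₂ = g₁ * g₃ * g₂ := by rw [h13]
    _ = g₁ * g₂ * g₃ := by rw [mul_assoc, mul_assoc, hc23.eq]
    _ = 1 := habc
  have s3 : g₃ ^ 2 = 1 := by
    rw [sq]
    calc g₃ * g₃ = g₁ * g₂ * g₃ := by rw [h12]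
    _ = 1 := habc
  exact ⟨orderOf_eq_prime s1 h1, orderOf_eq_prime s2 h2, orderOf_eq_prime s3 h3, habc⟩
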